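/- Let q be a prime power, k ≥ 1, Δ = (q^k − 1)/(q − 1), and let e₂ ≥ 1 be an integer with gcd(Δ, e₂) = 1. Then for every b ∈ F_{q^k} with b ≠ 0, the number of elements x ∈ F_{q^k} with Tr(b·x^{e₂}) = 0 equals q^{k−1}. -/

import Mathlib

open Polynomial

lemma aux_mem_range {F E : Type*} [Field F] [Fintype F] [Field E] [Fintype E] [Algebra F E]
    (c : E) (h : c ^ (Fintype.card F) = c) : ∃ a : F, algebraMap F E a = c := by
  classical
  set q := Fintype.card F with hq
  have hq2 : 1 < q := Fintype.one_lt_card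
  set S : Finset E := Finset.univ.image (algebraMap F E) with hS
  have hScard : S.card = q := by
    rw [hS, Finset.card_image_of_injective _ (algebraMap F E).injective, Finset.card_univ]
  by_contra hc
  push_neg at hc
  have hcS : c ∉ S := by
    simp only [hS, Finset.mem_image, Finset.mem_univ, true_and]
    rintro ⟨a, rfl⟩; exact hc a rfl
  have hpne : (X ^ q - X : E[X]) ≠ 0 := FiniteField.X_pow_card_sub_X_ne_zero E hq2
  have hsub : insert c S ⊆ (X ^ q - X : E[X]).roots.toFinset := by
    intro x hx
    rw [Multiset.mem_toFinset, Polynomial.mem_roots hpne]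
    simp only [IsRoot.def, eval_sub, eval_pow, eval_X, sub_eq_zero]
    rcases Finset.mem_insert.mp hx with rfl | hxS
    · exact h
    · obtain ⟨a, -, rfl⟩ := Finset.mem_image.mp hxS
      rw [← map_pow, FiniteField.pow_card]
  have hle : ((X ^ q - X : E[X]).roots.toFinset).card ≤ q := by
    refine (Multiset.toFinset_card_le _).trans ?_
    have := Polynomial.card_roots' (X ^ q - X : E[X])
    rwa [FiniteField.X_pow_card_sub_X_natDegree_eq E hq2] at this
  have := (Finset.card_le_card hsub)
  rw [Finset.card_insert_of_notMem hcS, hScard] at this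
  omega

lemma aux_exists_rep {F E : Type*} [Field F] [Fintype F] [Field E] [Fintype E] [Algebra F E]
    (Δ e₂ : ℕ) (hΔ : Δ * (Fintype.card F - 1) = Fintype.card E - 1)
    (he₂ : Nat.gcd Δ e₂ = 1) (z : E) (hz : z ≠ 0) :
    ∃ c : F, c ≠ 0 ∧ ∃ x : E, algebraMap F E c * x ^ e₂ = z := by
  classical
  set q := Fintype.card F with hq
  have hq2 : 1 < q := Fintype.one_lt_card
  obtain ⟨g, hg⟩ := IsCyclic.exists_generator (α := Eˣ)
  obtain ⟨a, ha⟩ := hg (Units.mk0 z hz)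
  have hco : IsCoprime (Δ : ℤ) (e₂ : ℤ) := by
    rw [Int.isCoprime_iff_gcd_eq_one, Int.gcd_natCast_natCast]; exact he₂
  obtain ⟨u, v, huv⟩ := hco
  set cu : Eˣ := g ^ ((Δ : ℤ) * (u * a)) with hcu
  set xu : Eˣ := g ^ (v * a) with hxu
  have hcardEu : Fintype.card Eˣ = Δ * (q - 1) := by
    rw [Fintype.card_units, ← hΔ]
  have h1 : cu * xu ^ e₂ = Units.mk0 z hz := by
    rw [hcu, hxu, ← zpow_natCast (g ^ (v * a)) e₂, ← zpow_mul, ← zpow_add, ← ha]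
    congr 1
    linear_combination a * huv
  have h2 : (cu : E) ^ q = (cu : E) := by
    have hc1 : cu ^ (q - 1) = 1 := by
      rw [hcu, ← zpow_natCast _ (q - 1), ← zpow_mul]
      have : (Δ : ℤ) * (u * a) * ((q : ℤ) - 1) = (u * a) * ((Δ * (q - 1) : ℕ) : ℤ) := by
        push_cast [Nat.cast_sub hq2.le]; ring
      rw [show ((q - 1 : ℕ) : ℤ) = (q : ℤ) - 1 by push_cast [Nat.cast_sub hq2.le]; ring, this,
        zpow_mul, zpow_natCast, ← hcardEu, pow_card_eq_one]
    have : (cu : E) ^ (q - 1) = 1 := by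
      rw [← Units.val_pow_eq_pow_val, hc1, Units.val_one]
    calc (cu : E) ^ q = (cu : E) ^ (q - 1) * (cu : E) := by
          rw [← pow_succ]; congr 1; omega
      _ = (cu : E) := by rw [this, one_mul]
  obtain ⟨c, hc⟩ := aux_mem_range (cu : E) h2
  refine ⟨c, ?_, (xu : E), ?_⟩
  · rintro rfl; exact cu.ne_zero (by simpa using hc.symm)
  · rw [hc, ← Units.val_pow_eq_pow_val, ← Units.val_mul, h1, Units.val_mk0]

/-- If `gcd(Δ, e₂) = 1` and `b ≠ 0`, then the number of `x ∈ F_{q^k}` with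
`Tr(b·x^{e₂}) = 0` equals `q^{k−1}`. -/
theorem card_trace_eq_zero
    (q k : ℕ) (hk : 1 ≤ k)
    (F E : Type*) [Field F] [Fintype F] [Field E] [Fintype E] [Algebra F E]
    (hcard : Fintype.card F = q) (hE : Fintype.card E = q ^ k)
    (Δ : ℕ) (hΔ : Δ * (q - 1) = q ^ k - 1)
    (e₂ : ℕ) (he₂pos : 1 ≤ e₂) (he₂ : Nat.gcd Δ e₂ = 1)
    (b : E) (hb : b ≠ 0) :
    Nat.card {x : E // Algebra.trace F E (b * x ^ e₂) = 0} = q ^ (k - 1) := by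
  classical
  have hq2 : 2 ≤ q := hcard ▸ Fintype.one_lt_card
  have hqk : 2 ≤ q ^ k := le_trans hq2 (Nat.le_self_pow (by omega) q)
  haveI : FiniteDimensional F E := Module.Finite.of_finite
  -- the trace-zero hyperplane
  set T : E →ₗ[F] F := (Algebra.trace F E).comp (LinearMap.mulLeft F b) with hT
  have hTapp : ∀ z : E, T z = Algebra.trace F E (b * z) := fun z => rfl
  have hTsurj : Function.Surjective T := by
    have h1 : Function.Surjective (LinearMap.mulLeft F b) := fun y =>
      ⟨b⁻¹ * y, by rw [LinearMap.mulLeft_apply, mul_inv_cancel_left₀ hb]⟩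
    exact (Algebra.trace_surjective F E).comp h1
  set Bs : Finset E := Finset.univ.filter (fun z => Algebra.trace F E (b * z) = 0) with hBs
  have hBscard : Bs.card = q ^ (k - 1) := by
    have e1 : (E ⧸ LinearMap.ker T) ≃ₗ[F] F := T.quotKerEquivOfSurjective hTsurj
    have e2 : Nat.card E = Nat.card (LinearMap.ker T) * Nat.card (E ⧸ LinearMap.ker T) :=
      Submodule.card_eq_card_quotient_mul_card _
    rw [Nat.card_congr e1.toEquiv] at e2
    simp only [Nat.card_eq_fintype_card] at e2
    rw [hcard, hE] at e2
    have hker : Fintype.card (LinearMap.ker T) = Bs.card := by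
      rw [hBs, ← Fintype.card_subtype]
      exact Fintype.card_congr (Equiv.subtypeEquivRight (fun z => by
        simp [LinearMap.mem_ker, hTapp]))
    rw [hker] at e2
    have hpow : q ^ k = q ^ (k - 1) * q := by
      rw [← pow_succ]; congr 1; omega
    rw [hpow] at e2
    exact Nat.eq_of_mul_eq_mul_right (by omega) e2.symm
  have h0Bs : (0 : E) ∈ Bs := by simp [hBs]
  -- the double counting
  set A : Finset E := Finset.univ.filter (fun x => Algebra.trace F E (b * x ^ e₂) = 0) with hA
  set Fs : Finset F := Finset.univ.filter (fun c : F => c ≠ 0) with hFs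
  have hFscard : Fs.card = q - 1 := by
    rw [hFs, Finset.filter_ne' Finset.univ 0, Finset.card_erase_of_mem (Finset.mem_univ _),
      Finset.card_univ, hcard]
  set s : Finset (F × E) := Fs ×ˢ Finset.univ with hs
  have hscard : s.card = (q - 1) * q ^ k := by
    rw [hs, Finset.card_product, hFscard, Finset.card_univ, hE]
  have hmem : ∀ p : F × E, p ∈ s ↔ p.1 ≠ 0 := by
    intro p; simp [hs, hFs, Finset.mem_product]
  set φ : F × E → E := fun p => algebraMap F E p.1 * p.2 ^ e₂ with hφ
  have he₂0 : e₂ ≠ 0 := by omega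
  -- fiber over 0
  have hfib0 : (s.filter (fun p => φ p = 0)).card = q - 1 := by
    have heq : s.filter (fun p => φ p = 0) = Fs ×ˢ ({0} : Finset E) := by
      ext ⟨c, x⟩
      simp only [Finset.mem_filter, Finset.mem_product, Finset.mem_singleton, hmem, hφ, hFs,
        Finset.mem_filter, Finset.mem_univ, true_and, mul_eq_zero,
        map_eq_zero_iff (algebraMap F E) (algebraMap F E).injective,
        pow_eq_zero_iff he₂0]
      tauto
    rw [heq, Finset.card_product, hFscard, Finset.card_singleton, mul_one]
  -- fibers over nonzero points all have the same cardinality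
  have hfib : ∀ z : E, z ≠ 0 →
      (s.filter (fun p => φ p = z)).card = (s.filter (fun p => φ p = 1)).card := by
    intro z hz
    obtain ⟨c₀, hc₀, x₀, hrep⟩ := aux_exists_rep Δ e₂ (by rw [hcard, hE]; exact hΔ) he₂ z hz
    have hx₀ : x₀ ≠ 0 := by
      rintro rfl
      rw [zero_pow he₂0, mul_zero] at hrep
      exact hz hrep.symm
    have key : ∀ (c : F) (x : E), φ (c₀ * c, x₀ * x) = z * φ (c, x) := by
      intro c x
      simp only [hφ]
      rw [map_mul, mul_pow, mul_mul_mul_comm, hrep]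
    have key' : ∀ (c : F) (x : E), φ (c₀⁻¹ * c, x₀⁻¹ * x) = z⁻¹ * φ (c, x) := by
      intro c x
      simp only [hφ]
      rw [map_mul, mul_pow, mul_mul_mul_comm, map_inv₀, inv_pow, ← mul_inv, hrep]
    refine Finset.card_nbij' (fun p => (c₀⁻¹ * p.1, x₀⁻¹ * p.2))
      (fun p => (c₀ * p.1, x₀ * p.2)) ?_ ?_ ?_ ?_
    · rintro ⟨c, x⟩ hp
      rw [Finset.mem_coe, Finset.mem_filter] at hp ⊢
      obtain ⟨hps, hpz⟩ := hp
      rw [hmem] at hps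
      exact ⟨(hmem _).mpr (mul_ne_zero (inv_ne_zero hc₀) hps),
        by rw [key', hpz, inv_mul_cancel₀ hz]⟩
    · rintro ⟨c, x⟩ hp
      rw [Finset.mem_coe, Finset.mem_filter] at hp ⊢
      obtain ⟨hps, hpz⟩ := hp
      rw [hmem] at hps
      exact ⟨(hmem _).mpr (mul_ne_zero hc₀ hps), by rw [key, hpz, mul_one]⟩
    · rintro ⟨c, x⟩ hp
      simp only [Prod.mk.injEq]
      constructor <;> field_simp
    · rintro ⟨c, x⟩ hp
      simp only [Prod.mk.injEq]
      constructor <;> field_simp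
  -- total count gives the constant fiber size
  set r : ℕ := (s.filter (fun p => φ p = 1)).card with hr
  have htot : s.card = ∑ z ∈ Finset.univ, (s.filter (fun p => φ p = z)).card :=
    Finset.card_eq_sum_card_fiberwise (fun p _ => Finset.mem_univ (φ p))
  have hsplit : ∀ (t : Finset E), (0:E) ∈ t →
      ∑ z ∈ t, (s.filter (fun p => φ p = z)).card = (q - 1) + (t.card - 1) * r := by
    intro t h0t
    rw [← Finset.add_sum_erase t _ h0t, hfib0]
    congr 1
    rw [Finset.sum_congr rfl (fun z hz => hfib z (Finset.ne_of_mem_erase hz)),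
      Finset.sum_const, Finset.card_erase_of_mem h0t, smul_eq_mul]
  have htot2 : (q - 1) * q ^ k = (q - 1) + (q ^ k - 1) * r := by
    rw [← hscard, htot, hsplit Finset.univ (Finset.mem_univ 0), Finset.card_univ, hE]
  have hrval : r = q - 1 := by
    have h1 : ((q:ℤ) - 1) * q ^ k = ((q:ℤ) - 1) + ((q:ℤ) ^ k - 1) * r := by
      zify [show 1 ≤ q by omega, show 1 ≤ q ^ k by omega] at htot2
      exact htot2
    have h2 : ((q:ℤ) ^ k - 1) * r = ((q:ℤ) ^ k - 1) * ((q:ℤ) - 1) := by ring_nf; linarith [h1]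
    have h3 : ((q:ℤ) ^ k - 1) ≠ 0 := by
      have : (2:ℤ) ≤ (q:ℤ) ^ k := by exact_mod_cast hqk
      omega
    have := mul_left_cancel₀ h3 h2
    omega
  -- count over Bs
  have hcount : ((s.filter (fun p => φ p ∈ Bs)).card : ℕ)
      = (q - 1) + (q ^ (k - 1) - 1) * r := by
    have h1 : (s.filter (fun p => φ p ∈ Bs)).card
        = ∑ z ∈ Bs, ((s.filter (fun p => φ p ∈ Bs)).filter (fun p => φ p = z)).card :=
      Finset.card_eq_sum_card_fiberwise (fun p hp => (Finset.mem_filter.mp hp).2)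
    have h2 : ∀ z ∈ Bs, (s.filter (fun p => φ p ∈ Bs)).filter (fun p => φ p = z)
        = s.filter (fun p => φ p = z) := by
      intro z hzB
      ext p
      simp only [Finset.mem_filter, and_assoc]
      constructor
      · rintro ⟨h1, h2, h3⟩; exact ⟨h1, h3⟩
      · rintro ⟨h1, h3⟩; exact ⟨h1, h3 ▸ hzB, h3⟩
    rw [h1, Finset.sum_congr rfl (fun z hz => by rw [h2 z hz]), hsplit Bs h0Bs, hBscard]
  -- identify the left side with (q-1) * A.card
  have hPA : (s.filter (fun p => φ p ∈ Bs)).card = (q - 1) * A.card := by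
    have heq : s.filter (fun p => φ p ∈ Bs) = Fs ×ˢ A := by
      ext ⟨c, x⟩
      simp only [Finset.mem_filter, Finset.mem_product, hmem, hφ, hBs, hA, hFs,
        Finset.mem_univ, true_and]
      constructor
      · rintro ⟨hc, htr⟩
        refine ⟨hc, ?_⟩
        have : b * (algebraMap F E c * x ^ e₂) = c • (b * x ^ e₂) := by
          rw [Algebra.smul_def]; ring
        rw [this, map_smul, smul_eq_mul, mul_eq_zero] at htr
        exact htr.resolve_left hc
      · rintro ⟨hc, htr⟩
        refine ⟨hc, ?_⟩
        have : b * (algebraMap F E c * x ^ e₂) = c • (b * x ^ e₂) := by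
          rw [Algebra.smul_def]; ring
        rw [this, map_smul, smul_eq_mul, htr, mul_zero]
    rw [heq, Finset.card_product, hFscard]
  -- final arithmetic
  have hAcard : A.card = q ^ (k - 1) := by
    rw [hPA, hrval] at hcount
    have h1 : ((q:ℤ) - 1) * A.card = ((q:ℤ) - 1) + ((q:ℤ) ^ (k-1) - 1) * ((q:ℤ) - 1) := by
      zify [show 1 ≤ q by omega, show 1 ≤ q ^ (k-1) from Nat.one_le_pow _ _ (by omega)] at hcount
      exact_mod_cast hcount
    have h2 : ((q:ℤ) - 1) * A.card = ((q:ℤ) - 1) * (q:ℤ) ^ (k-1) := by linarith [h1]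
    have h3 : ((q:ℤ) - 1) ≠ 0 := by
      have : (2:ℤ) ≤ (q:ℤ) := by exact_mod_cast hq2
      omega
    have := mul_left_cancel₀ h3 h2
    exact_mod_cast this
  rw [Nat.card_eq_fintype_card, Fintype.card_subtype, ← hA, hAcard]
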